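/- Let K be a field and n, m ≥ 1. The join-meet ideal I_{L₂(n,m)} = (a_i b_j − st : 1 ≤ i ≤ n, 1 ≤ j ≤ m) in K[s, a_1, ..., a_n, b_1, ..., b_m, t] is a radical ideal. -/

import Mathlib

open MvPolynomial

/-- Variables of the polynomial ring `K[s, a_1, …, a_n, b_1, …, b_m, t]`
(`a i` stands for `a_{i+1}`). -/
inductive Var (n m : ℕ) : Type where
  | s : Var n m
  | a : Fin n → Var n m
  | b : Fin m → Var n m
  | t : Var n m
deriving DecidableEq

/-- The generators `a_i b_j − s t` of the join-meet ideal of `L₂(n,m)`. -/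
def joinMeetGens (K : Type) [Field K] (n m : ℕ) : Set (MvPolynomial (Var n m) K) :=
  {p | ∃ (i : Fin n) (j : Fin m),
    p = X (Var.a i) * X (Var.b j) - X Var.s * X Var.t}

namespace JoinMeetAux

variable {K : Type} [Field K] {n m : ℕ}

noncomputable section

/-! ### Generic lemmas -/

/-- generic: `f - aeval E f` lies in the ideal generated by the `X i - E i`. -/
theorem sub_aeval_mem_span {σ : Type*} (E : σ → MvPolynomial σ K) (f : MvPolynomial σ K) :
    f - aeval E f ∈ Ideal.span (Set.range fun i => X i - E i) := by
  induction f using MvPolynomial.induction_on with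
  | C a => simp
  | add p q hp hq =>
      have : p + q - aeval E (p + q) = (p - aeval E p) + (q - aeval E q) := by
        rw [map_add]; ring
      rw [this]; exact Ideal.add_mem _ hp hq
  | mul_X p i hp =>
      have : p * X i - aeval E (p * X i)
          = (p - aeval E p) * X i + aeval E p * (X i - E i) := by
        rw [map_mul, aeval_X]; ring
      rw [this]
      exact Ideal.add_mem _ (Ideal.mul_mem_right _ _ hp)
        (Ideal.mul_mem_left _ _ (Ideal.subset_span ⟨i, rfl⟩))

/-- If `aeval E f = 0` where `E` kills variables in `S` and fixes the rest,
then every monomial of `f` uses a variable in `S`. -/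
theorem support_cond_of_aeval {σ : Type*} (E : σ → MvPolynomial σ K) (S : Set σ)
    (hE : ∀ i, (i ∈ S ∧ E i = 0) ∨ E i = X i) (f : MvPolynomial σ K)
    (hf : aeval E f = 0) : ∀ d ∈ f.support, ∃ i ∈ S, d i ≠ 0 := by
  rw [← mem_ideal_span_X_image]
  have h := sub_aeval_mem_span E f
  rw [hf, sub_zero] at h
  refine Ideal.span_le.mpr ?_ h
  rintro _ ⟨i, rfl⟩
  rcases hE i with ⟨hi, h0⟩ | h0
  · simp only [h0, sub_zero]; exact Ideal.subset_span ⟨i, hi, rfl⟩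
  · simp only [h0, sub_self]; exact Ideal.zero_mem _

/-- factor two distinct variables out of a monomial -/
theorem monomial_two_factor {σ : Type*} [DecidableEq σ] {d : σ →₀ ℕ} {u v : σ}
    (huv : u ≠ v) (hu : d u ≠ 0) (hv : d v ≠ 0) (c : K) :
    monomial d c = X u * X v *
      monomial (d - Finsupp.single u 1 - Finsupp.single v 1) c := by
  rw [X, X, monomial_mul, monomial_mul]
  have he : Finsupp.single u 1 + Finsupp.single v 1 +
      (d - Finsupp.single u 1 - Finsupp.single v 1) = d := by
    ext i
    simp only [Finsupp.add_apply, Finsupp.tsub_apply, Finsupp.single_apply]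
    split_ifs with h1 h2 h3 <;> subst_vars <;>
      first | exact absurd rfl huv | omega
  rw [he, one_mul, one_mul]

/-! ### The substitution maps -/

/-- kill `s` and the `a_i` -/
def Eas : Var n m → MvPolynomial (Var n m) K
  | Var.s => 0
  | Var.a _ => 0
  | Var.b j => X (Var.b j)
  | Var.t => X Var.t

/-- kill `t` and the `a_i` -/
def Eat : Var n m → MvPolynomial (Var n m) K
  | Var.s => X Var.s
  | Var.a _ => 0
  | Var.b j => X (Var.b j)
  | Var.t => 0

/-- kill `s` and the `b_j` -/
def Ebs : Var n m → MvPolynomial (Var n m) K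
  | Var.s => 0
  | Var.a i => X (Var.a i)
  | Var.b _ => 0
  | Var.t => X Var.t

/-- kill `t` and the `b_j` -/
def Ebt : Var n m → MvPolynomial (Var n m) K
  | Var.s => X Var.s
  | Var.a i => X (Var.a i)
  | Var.b _ => 0
  | Var.t => 0

/-- the Segre-type map `s ↦ x₀x₁, t ↦ x₂x₃, aᵢ ↦ x₀x₂, bⱼ ↦ x₁x₃` -/
def phi0fun : Var n m → MvPolynomial (Fin 4) K
  | Var.s => X 0 * X 1
  | Var.t => X 2 * X 3
  | Var.a _ => X 0 * X 2
  | Var.b _ => X 1 * X 3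

/-- collapse onto four variables -/
def kappafun : Var n m → MvPolynomial (Fin 4) K
  | Var.s => X 0
  | Var.t => X 1
  | Var.a _ => X 2
  | Var.b _ => X 3

/-- inclusion of four variables back -/
def iotafun (hn : 1 ≤ n) (hm : 1 ≤ m) : Fin 4 → MvPolynomial (Var n m) K
  | 0 => X Var.s
  | 1 => X Var.t
  | 2 => X (Var.a ⟨0, hn⟩)
  | 3 => X (Var.b ⟨0, hm⟩)

/-- collapse all `a_i` to `a_0` and all `b_j` to `b_0` -/
def rhofun (hn : 1 ≤ n) (hm : 1 ≤ m) : Var n m → MvPolynomial (Var n m) K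
  | Var.s => X Var.s
  | Var.t => X Var.t
  | Var.a _ => X (Var.a ⟨0, hn⟩)
  | Var.b _ => X (Var.b ⟨0, hm⟩)

/-- the Segre map on four variables -/
def psifun : Fin 4 → MvPolynomial (Fin 4) K
  | 0 => X 0 * X 1
  | 1 => X 2 * X 3
  | 2 => X 0 * X 2
  | 3 => X 1 * X 3

theorem psi_kappa (f : MvPolynomial (Var n m) K) :
    aeval (R := K) (psifun (K := K)) (aeval (R := K) (kappafun (K := K)) f) = aeval (R := K) (phi0fun (K := K)) f := by
  rw [comp_aeval_apply]
  have hfun : (fun i => aeval (R := K) psifun (kappafun (K := K) i)) = phi0fun (K := K) (n := n) (m := m) := by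
    funext v
    cases v <;> simp [kappafun, psifun, phi0fun]
  rw [hfun]

theorem iota_kappa (hn : 1 ≤ n) (hm : 1 ≤ m) (f : MvPolynomial (Var n m) K) :
    aeval (R := K) (iotafun (K := K) hn hm) (aeval (R := K) (kappafun (K := K)) f) = aeval (R := K) (rhofun (K := K) hn hm) f := by
  rw [comp_aeval_apply]
  have hfun : (fun i => aeval (R := K) (iotafun (K := K) hn hm) (kappafun (K := K) i))
      = rhofun (K := K) hn hm := by
    funext v
    cases v <;> simp [kappafun, iotafun, rhofun]
  rw [hfun]


/-! ### The ideal is contained in all five kernels -/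

theorem aeval_eq_zero_of_mem {A : Type*} [CommRing A] [Algebra K A]
    (E : Var n m → A)
    (hE : ∀ (i : Fin n) (j : Fin m),
      aeval (R := K) E (X (Var.a i) * X (Var.b j) - X Var.s * X Var.t) = 0)
    (f : MvPolynomial (Var n m) K) (hf : f ∈ Ideal.span (joinMeetGens K n m)) :
    aeval (R := K) E f = 0 := by
  have hle : Ideal.span (joinMeetGens K n m) ≤ RingHom.ker (aeval (R := K) E) := by
    rw [Ideal.span_le]
    rintro p ⟨i, j, rfl⟩
    simpa [RingHom.mem_ker] using hE i j
  simpa [RingHom.mem_ker] using hle hf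

theorem vanish_phi0 (f : MvPolynomial (Var n m) K)
    (hf : f ∈ Ideal.span (joinMeetGens K n m)) :
    aeval (R := K) (phi0fun (K := K)) f = 0 :=
  aeval_eq_zero_of_mem _ (fun i j => by
    simp only [map_sub, map_mul, aeval_X, phi0fun]; ring) f hf

theorem vanish_Eas (f : MvPolynomial (Var n m) K)
    (hf : f ∈ Ideal.span (joinMeetGens K n m)) :
    aeval (R := K) (Eas (K := K)) f = 0 :=
  aeval_eq_zero_of_mem _ (fun i j => by
    simp only [map_sub, map_mul, aeval_X, Eas]; ring) f hf

theorem vanish_Eat (f : MvPolynomial (Var n m) K)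
    (hf : f ∈ Ideal.span (joinMeetGens K n m)) :
    aeval (R := K) (Eat (K := K)) f = 0 :=
  aeval_eq_zero_of_mem _ (fun i j => by
    simp only [map_sub, map_mul, aeval_X, Eat]; ring) f hf

theorem vanish_Ebs (f : MvPolynomial (Var n m) K)
    (hf : f ∈ Ideal.span (joinMeetGens K n m)) :
    aeval (R := K) (Ebs (K := K)) f = 0 :=
  aeval_eq_zero_of_mem _ (fun i j => by
    simp only [map_sub, map_mul, aeval_X, Ebs]; ring) f hf

theorem vanish_Ebt (f : MvPolynomial (Var n m) K)
    (hf : f ∈ Ideal.span (joinMeetGens K n m)) :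
    aeval (R := K) (Ebt (K := K)) f = 0 :=
  aeval_eq_zero_of_mem _ (fun i j => by
    simp only [map_sub, map_mul, aeval_X, Ebt]; ring) f hf

/-! ### `st·(h - ρ h)` is in the ideal -/

theorem st_mul_sub_rho_mem (hn : 1 ≤ n) (hm : 1 ≤ m) (h : MvPolynomial (Var n m) K) :
    X Var.s * X Var.t * (h - aeval (R := K) (rhofun (K := K) hn hm) h)
      ∈ Ideal.span (joinMeetGens K n m) := by
  have hmem := sub_aeval_mem_span (rhofun hn hm) h
  have hle : Ideal.span (Set.range fun i => (X i : MvPolynomial (Var n m) K) - rhofun hn hm i)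
      ≤ (Ideal.span (joinMeetGens K n m)).colon ((Ideal.span {X Var.s * X Var.t} : Ideal (MvPolynomial (Var n m) K)) : Set (MvPolynomial (Var n m) K)) := by
    rw [Ideal.span_le]
    rintro _ ⟨v, rfl⟩
    rw [SetLike.mem_coe, Ideal.mem_colon_span_singleton]
    cases v with
    | s => simp [rhofun]
    | t => simp [rhofun]
    | a i =>
        have key : ((X (Var.a i) : MvPolynomial (Var n m) K) - X (Var.a ⟨0, hn⟩)) * (X Var.s * X Var.t)
            = X (Var.a ⟨0, hn⟩) *
                (X (Var.a i) * X (Var.b ⟨0, hm⟩) - X Var.s * X Var.t)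
              - X (Var.a i) *
                (X (Var.a ⟨0, hn⟩) * X (Var.b ⟨0, hm⟩) - X Var.s * X Var.t) := by
          ring
        simp only [rhofun]
        rw [key]
        exact sub_mem (Ideal.mul_mem_left _ _ (Ideal.subset_span ⟨i, ⟨0, hm⟩, rfl⟩))
          (Ideal.mul_mem_left _ _ (Ideal.subset_span ⟨⟨0, hn⟩, ⟨0, hm⟩, rfl⟩))
    | b j =>
        have key : ((X (Var.b j) : MvPolynomial (Var n m) K) - X (Var.b ⟨0, hm⟩)) * (X Var.s * X Var.t)
            = X (Var.b ⟨0, hm⟩) *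
                (X (Var.a ⟨0, hn⟩) * X (Var.b j) - X Var.s * X Var.t)
              - X (Var.b j) *
                (X (Var.a ⟨0, hn⟩) * X (Var.b ⟨0, hm⟩) - X Var.s * X Var.t) := by
          ring
        simp only [rhofun]
        rw [key]
        exact sub_mem (Ideal.mul_mem_left _ _ (Ideal.subset_span ⟨⟨0, hn⟩, j, rfl⟩))
          (Ideal.mul_mem_left _ _ (Ideal.subset_span ⟨⟨0, hn⟩, ⟨0, hm⟩, rfl⟩))
  have hco := Ideal.mem_colon_span_singleton.mp (hle hmem)
  have : (h - aeval (R := K) (rhofun (K := K) hn hm) h) * (X Var.s * X Var.t)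
      = X Var.s * X Var.t * (h - aeval (R := K) (rhofun (K := K) hn hm) h) := by ring
  rwa [this] at hco


/-! ### Support condition from the four coordinate kernels -/

theorem support_st_or_ab (f : MvPolynomial (Var n m) K)
    (h1 : aeval (R := K) (Eas (K := K)) f = 0) (h2 : aeval (R := K) (Eat (K := K)) f = 0)
    (h3 : aeval (R := K) (Ebs (K := K)) f = 0) (h4 : aeval (R := K) (Ebt (K := K)) f = 0) :
    ∀ d ∈ f.support, (d Var.s ≠ 0 ∧ d Var.t ≠ 0) ∨
      ∃ (i : Fin n) (j : Fin m), d (Var.a i) ≠ 0 ∧ d (Var.b j) ≠ 0 := by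
  have c1 := support_cond_of_aeval (Eas (K := K)) ({Var.s} ∪ Set.range Var.a)
    (fun i => by cases i <;> simp [Eas]) f h1
  have c2 := support_cond_of_aeval (Eat (K := K)) ({Var.t} ∪ Set.range Var.a)
    (fun i => by cases i <;> simp [Eat]) f h2
  have c3 := support_cond_of_aeval (Ebs (K := K)) ({Var.s} ∪ Set.range Var.b)
    (fun i => by cases i <;> simp [Ebs]) f h3
  have c4 := support_cond_of_aeval (Ebt (K := K)) ({Var.t} ∪ Set.range Var.b)
    (fun i => by cases i <;> simp [Ebt]) f h4
  intro d hd
  by_cases ha : ∃ i : Fin n, d (Var.a i) ≠ 0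
  · by_cases hb : ∃ j : Fin m, d (Var.b j) ≠ 0
    · obtain ⟨i, hi⟩ := ha; obtain ⟨j, hj⟩ := hb
      exact Or.inr ⟨i, j, hi, hj⟩
    · push_neg at hb
      refine Or.inl ⟨?_, ?_⟩
      · obtain ⟨v, hv, hv0⟩ := c3 d hd
        rcases hv with hv | ⟨j, rfl⟩
        · rw [Set.mem_singleton_iff] at hv; subst hv; exact hv0
        · exact (hv0 (hb j)).elim
      · obtain ⟨v, hv, hv0⟩ := c4 d hd
        rcases hv with hv | ⟨j, rfl⟩
        · rw [Set.mem_singleton_iff] at hv; subst hv; exact hv0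
        · exact (hv0 (hb j)).elim
  · push_neg at ha
    refine Or.inl ⟨?_, ?_⟩
    · obtain ⟨v, hv, hv0⟩ := c1 d hd
      rcases hv with hv | ⟨i, rfl⟩
      · rw [Set.mem_singleton_iff] at hv; subst hv; exact hv0
      · exact (hv0 (ha i)).elim
    · obtain ⟨v, hv, hv0⟩ := c2 d hd
      rcases hv with hv | ⟨i, rfl⟩
      · rw [Set.mem_singleton_iff] at hv; subst hv; exact hv0
      · exact (hv0 (ha i)).elim

/-! ### Factoring out `st` modulo the ideal -/

theorem exists_st_factor (f : MvPolynomial (Var n m) K)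
    (hsupp : ∀ d ∈ f.support, (d Var.s ≠ 0 ∧ d Var.t ≠ 0) ∨
      ∃ (i : Fin n) (j : Fin m), d (Var.a i) ≠ 0 ∧ d (Var.b j) ≠ 0) :
    ∃ h, f - X Var.s * X Var.t * h ∈ Ideal.span (joinMeetGens K n m) := by
  have key : ∀ d ∈ f.support, ∃ h', monomial d (coeff d f) - X Var.s * X Var.t * h'
      ∈ Ideal.span (joinMeetGens K n m) := by
    intro d hd
    rcases hsupp d hd with ⟨hs, ht⟩ | ⟨i, j, hi, hj⟩
    · refine ⟨monomial (d - Finsupp.single Var.s 1 - Finsupp.single Var.t 1) (coeff d f), ?_⟩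
      rw [← monomial_two_factor (fun h => by cases h) hs ht, sub_self]
      exact Ideal.zero_mem _
    · refine ⟨monomial (d - Finsupp.single (Var.a i) 1 - Finsupp.single (Var.b j) 1)
        (coeff d f), ?_⟩
      rw [monomial_two_factor (fun h => by cases h) hi hj (coeff d f)]
      have heq : X (Var.a i) * X (Var.b j) *
            monomial (d - Finsupp.single (Var.a i) 1 - Finsupp.single (Var.b j) 1) (coeff d f)
          - X Var.s * X Var.t *
            monomial (d - Finsupp.single (Var.a i) 1 - Finsupp.single (Var.b j) 1) (coeff d f)
          = (X (Var.a i) * X (Var.b j) - X Var.s * X Var.t) *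
            monomial (d - Finsupp.single (Var.a i) 1 - Finsupp.single (Var.b j) 1)
              (coeff d f) := by
        ring
      rw [heq]
      exact Ideal.mul_mem_right _ _ (Ideal.subset_span ⟨i, j, rfl⟩)
  choose! H hH using key
  refine ⟨∑ d ∈ f.support, H d, ?_⟩
  have heq : f - X Var.s * X Var.t * ∑ d ∈ f.support, H d
      = ∑ d ∈ f.support, (monomial d (coeff d f) - X Var.s * X Var.t * H d) := by
    rw [Finset.sum_sub_distrib, ← Finset.mul_sum, support_sum_monomial_coeff]
  rw [heq]
  exact Ideal.sum_mem _ fun d hd => hH d hd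


/-! ### Normal forms in the 4-variable ring -/

theorem pow_two_factor (u v : Fin 4) (w : Fin 4 →₀ ℕ) (k : ℕ) (c : K) :
    (X u * X v) ^ k * monomial w c
      = monomial (w + Finsupp.single u k + Finsupp.single v k) c := by
  rw [mul_pow, X_pow_eq_monomial, X_pow_eq_monomial, monomial_mul, monomial_mul,
    one_mul, one_mul]
  congr 1
  abel_nf

theorem exists_normal (g : MvPolynomial (Fin 4) K) :
    ∃ g', g - g' ∈ Ideal.span {(X 2 * X 3 - X 0 * X 1 : MvPolynomial (Fin 4) K)}
      ∧ ∀ d ∈ g'.support, d 2 = 0 ∨ d 3 = 0 := by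
  have key : ∀ d ∈ g.support, ∃ p : MvPolynomial (Fin 4) K,
      (monomial d (coeff d g) - p ∈
        Ideal.span {(X 2 * X 3 - X 0 * X 1 : MvPolynomial (Fin 4) K)}) ∧
      ∀ d' ∈ p.support, d' 2 = 0 ∨ d' 3 = 0 := by
    intro d _
    set c := coeff d g with hc
    set k := min (d 2) (d 3) with hk
    have hk2 : k ≤ d 2 := min_le_left _ _
    have hk3 : k ≤ d 3 := min_le_right _ _
    set w := d - Finsupp.single 2 k - Finsupp.single 3 k with hw
    have hd : d = w + Finsupp.single 2 k + Finsupp.single 3 k := by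
      ext i
      simp only [hw, Finsupp.add_apply, Finsupp.tsub_apply, Finsupp.single_apply]
      fin_cases i <;> simp <;> omega
    refine ⟨monomial (w + Finsupp.single 0 k + Finsupp.single 1 k) c, ?_, ?_⟩
    · have h1 : monomial d c = (X 2 * X 3 : MvPolynomial (Fin 4) K) ^ k * monomial w c := by
        rw [pow_two_factor, ← hd]
      have h2 : monomial (w + Finsupp.single 0 k + Finsupp.single 1 k) c
          = (X 0 * X 1 : MvPolynomial (Fin 4) K) ^ k * monomial w c := by
        rw [pow_two_factor]
      rw [h1, h2, ← sub_mul]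
      exact Ideal.mul_mem_right _ _
        (Ideal.mem_span_singleton.mpr (sub_dvd_pow_sub_pow _ _ k))
    · intro d' hd'
      have hd'' : d' = w + Finsupp.single 0 k + Finsupp.single 1 k :=
        Finset.mem_singleton.mp (support_monomial_subset hd')
      subst hd''
      have e2 : ((w + Finsupp.single 0 k + Finsupp.single 1 k : Fin 4 →₀ ℕ)) 2 = d 2 - k := by
        simp [hw, Finsupp.add_apply, Finsupp.tsub_apply, Finsupp.single_apply]
      have e3 : ((w + Finsupp.single 0 k + Finsupp.single 1 k : Fin 4 →₀ ℕ)) 3 = d 3 - k := by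
        simp [hw, Finsupp.add_apply, Finsupp.tsub_apply, Finsupp.single_apply]
      rw [e2, e3]
      omega
  choose! H hH1 hH2 using key
  refine ⟨∑ d ∈ g.support, H d, ?_, ?_⟩
  · have heq : g - ∑ d ∈ g.support, H d
        = ∑ d ∈ g.support, (monomial d (coeff d g) - H d) := by
      rw [Finset.sum_sub_distrib, support_sum_monomial_coeff]
    rw [heq]
    exact Ideal.sum_mem _ fun d hd => hH1 d hd
  · intro d hd
    obtain ⟨d0, hd0, hmem⟩ := Finset.mem_biUnion.mp (MvPolynomial.support_sum hd)
    exact hH2 d0 hd0 d hmem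

/-! ### Injectivity on normal forms -/

theorem C_mul_X_pows (c : K) (e0 e1 e2 e3 : ℕ) :
    (C c : MvPolynomial (Fin 4) K) * X 0 ^ e0 * X 1 ^ e1 * X 2 ^ e2 * X 3 ^ e3
      = monomial (Finsupp.single 0 e0 + Finsupp.single 1 e1 + Finsupp.single 2 e2
          + Finsupp.single 3 e3) c := by
  rw [C_apply, X_pow_eq_monomial, X_pow_eq_monomial, X_pow_eq_monomial, X_pow_eq_monomial,
    monomial_mul, monomial_mul, monomial_mul, monomial_mul, mul_one, mul_one, mul_one, mul_one,
    zero_add]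

theorem monomial_eq_C_mul (d : Fin 4 →₀ ℕ) (c : K) :
    monomial d c = (C c : MvPolynomial (Fin 4) K)
      * X 0 ^ (d 0) * X 1 ^ (d 1) * X 2 ^ (d 2) * X 3 ^ (d 3) := by
  have hd : d = Finsupp.single 0 (d 0) + Finsupp.single 1 (d 1) + Finsupp.single 2 (d 2)
      + Finsupp.single 3 (d 3) := by
    ext i
    fin_cases i <;> simp [Finsupp.single_apply]
  rw [C_mul_X_pows, ← hd]

/-- the exponent transformation of the Segre map -/
def Tm (d : Fin 4 →₀ ℕ) : Fin 4 →₀ ℕ :=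
  Finsupp.single 0 (d 0 + d 2) + Finsupp.single 1 (d 0 + d 3)
    + Finsupp.single 2 (d 1 + d 2) + Finsupp.single 3 (d 1 + d 3)

theorem Tm_apply0 (d : Fin 4 →₀ ℕ) : Tm d 0 = d 0 + d 2 := by
  simp [Tm, Finsupp.single_apply]
theorem Tm_apply1 (d : Fin 4 →₀ ℕ) : Tm d 1 = d 0 + d 3 := by
  simp [Tm, Finsupp.single_apply]
theorem Tm_apply2 (d : Fin 4 →₀ ℕ) : Tm d 2 = d 1 + d 2 := by
  simp [Tm, Finsupp.single_apply]
theorem Tm_apply3 (d : Fin 4 →₀ ℕ) : Tm d 3 = d 1 + d 3 := by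
  simp [Tm, Finsupp.single_apply]

theorem psi_monomial (d : Fin 4 →₀ ℕ) (c : K) :
    aeval (R := K) (psifun (K := K)) (monomial d c) = monomial (Tm d) c := by
  rw [monomial_eq_C_mul]
  simp only [map_mul, map_pow, aeval_C, aeval_X, psifun, algebraMap_eq]
  rw [Tm, ← C_mul_X_pows]
  ring

theorem Tm_inj {d d' : Fin 4 →₀ ℕ} (hnd : d 2 = 0 ∨ d 3 = 0) (hnd' : d' 2 = 0 ∨ d' 3 = 0)
    (h : Tm d = Tm d') : d = d' := by
  have e0 : d 0 + d 2 = d' 0 + d' 2 := by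
    have := DFunLike.congr_fun h (0 : Fin 4); rwa [Tm_apply0, Tm_apply0] at this
  have e1 : d 0 + d 3 = d' 0 + d' 3 := by
    have := DFunLike.congr_fun h (1 : Fin 4); rwa [Tm_apply1, Tm_apply1] at this
  have e2 : d 1 + d 2 = d' 1 + d' 2 := by
    have := DFunLike.congr_fun h (2 : Fin 4); rwa [Tm_apply2, Tm_apply2] at this
  have e3 : d 1 + d 3 = d' 1 + d' 3 := by
    have := DFunLike.congr_fun h (3 : Fin 4); rwa [Tm_apply3, Tm_apply3] at this
  ext i
  fin_cases i
  · exact (show d 0 = d' 0 by omega)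
  · exact (show d 1 = d' 1 by omega)
  · exact (show d 2 = d' 2 by omega)
  · exact (show d 3 = d' 3 by omega)

theorem normal_eq_zero (g : MvPolynomial (Fin 4) K)
    (hnorm : ∀ d ∈ g.support, d 2 = 0 ∨ d 3 = 0)
    (hker : aeval (R := K) (psifun (K := K)) g = 0) : g = 0 := by
  by_contra hg
  obtain ⟨d, hd⟩ := (MvPolynomial.support_nonempty.mpr hg)
  have hexp : aeval (R := K) (psifun (K := K)) g
      = ∑ d' ∈ g.support, monomial (Tm d') (coeff d' g) := by
    conv_lhs => rw [← support_sum_monomial_coeff g]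
    rw [map_sum]
    exact Finset.sum_congr rfl fun d' _ => psi_monomial d' _
  have hcoeff : coeff (Tm d) (aeval (R := K) (psifun (K := K)) g) = coeff d g := by
    rw [hexp, coeff_sum]
    rw [Finset.sum_eq_single_of_mem d hd]
    · rw [coeff_monomial, if_pos rfl]
    · intro d' hd' hne
      rw [coeff_monomial, if_neg]
      intro hTT
      exact hne (Tm_inj (hnorm d' hd') (hnorm d hd) hTT)
  rw [hker, coeff_zero] at hcoeff
  exact (mem_support_iff.mp hd) hcoeff.symm

theorem mem_gen_of_psi_eq_zero (g : MvPolynomial (Fin 4) K)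
    (hg : aeval (R := K) (psifun (K := K)) g = 0) :
    g ∈ Ideal.span {(X 2 * X 3 - X 0 * X 1 : MvPolynomial (Fin 4) K)} := by
  obtain ⟨g', hspan, hnorm⟩ := exists_normal g
  have hgen : aeval (R := K) (psifun (K := K)) (X 2 * X 3 - X 0 * X 1) = 0 := by
    simp only [map_sub, map_mul, aeval_X, psifun]
    ring
  have hsub : aeval (R := K) (psifun (K := K)) (g - g') = 0 := by
    obtain ⟨u, hu⟩ := Ideal.mem_span_singleton.mp hspan
    rw [hu, map_mul, hgen, zero_mul]
  have hg' : aeval (R := K) (psifun (K := K)) g' = 0 := by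
    rw [map_sub, hg, zero_sub, neg_eq_zero] at hsub
    exact hsub
  have h0 := normal_eq_zero g' hnorm hg'
  rw [h0, sub_zero] at hspan
  exact hspan


/-! ### The main membership lemma -/

theorem mem_of_vanish (hn : 1 ≤ n) (hm : 1 ≤ m) (f : MvPolynomial (Var n m) K)
    (h1 : aeval (R := K) (Eas (K := K)) f = 0) (h2 : aeval (R := K) (Eat (K := K)) f = 0)
    (h3 : aeval (R := K) (Ebs (K := K)) f = 0) (h4 : aeval (R := K) (Ebt (K := K)) f = 0)
    (h5 : aeval (R := K) (phi0fun (K := K)) f = 0) :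
    f ∈ Ideal.span (joinMeetGens K n m) := by
  obtain ⟨h, hh⟩ := exists_st_factor f (support_st_or_ab f h1 h2 h3 h4)
  have hsth : aeval (R := K) (phi0fun (K := K)) (X Var.s * X Var.t * h) = 0 := by
    have hv := vanish_phi0 _ hh
    rw [map_sub, h5, zero_sub, neg_eq_zero] at hv
    exact hv
  have hst : aeval (R := K) (phi0fun (K := K) (n := n) (m := m)) (X Var.s * X Var.t)
      = (X 0 * X 1) * (X 2 * X 3 : MvPolynomial (Fin 4) K) := by
    simp [phi0fun]
  have hhv : aeval (R := K) (phi0fun (K := K)) h = 0 := by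
    rw [map_mul, hst] at hsth
    rcases mul_eq_zero.mp hsth with h0 | h0
    · exact absurd h0 (mul_ne_zero (mul_ne_zero (X_ne_zero _) (X_ne_zero _))
        (mul_ne_zero (X_ne_zero _) (X_ne_zero _)))
    · exact h0
  have hrho : aeval (R := K) (rhofun (K := K) hn hm) h ∈ Ideal.span (joinMeetGens K n m) := by
    have hker : aeval (R := K) (psifun (K := K))
        (aeval (R := K) (kappafun (K := K)) h) = 0 := by
      rw [psi_kappa]; exact hhv
    obtain ⟨u, hu⟩ := Ideal.mem_span_singleton.mp (mem_gen_of_psi_eq_zero _ hker)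
    have heq : aeval (R := K) (rhofun (K := K) hn hm) h
        = aeval (R := K) (iotafun (K := K) hn hm) ((X 2 * X 3 - X 0 * X 1) * u) := by
      rw [← hu, iota_kappa]
    rw [heq, map_mul]
    refine Ideal.mul_mem_right _ _ ?_
    have hgen : aeval (R := K) (iotafun (K := K) hn hm) (X 2 * X 3 - X 0 * X 1)
        = X (Var.a ⟨0, hn⟩) * X (Var.b ⟨0, hm⟩) - X Var.s * X Var.t := by
      simp [iotafun]
    rw [hgen]
    exact Ideal.subset_span ⟨⟨0, hn⟩, ⟨0, hm⟩, rfl⟩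
  have hsthI : X Var.s * X Var.t * h ∈ Ideal.span (joinMeetGens K n m) := by
    have hsum := Ideal.add_mem _ (st_mul_sub_rho_mem hn hm h)
      (Ideal.mul_mem_left _ (X Var.s * X Var.t) hrho)
    have heq : X Var.s * X Var.t * h
        = X Var.s * X Var.t * (h - aeval (R := K) (rhofun (K := K) hn hm) h)
          + X Var.s * X Var.t * aeval (R := K) (rhofun (K := K) hn hm) h := by
      ring
    rw [heq]
    exact hsum
  have hfin := Ideal.add_mem _ hh hsthI
  have heq : f = (f - X Var.s * X Var.t * h) + X Var.s * X Var.t * h := by ring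
  rw [heq]
  exact hfin

end

end JoinMeetAux

/-- the join-meet ideal `I_{L₂(n,m)} = (a_i b_j − st)` is radical. -/
theorem joinMeetIdeal_L2_isRadical (K : Type) [Field K] (n m : ℕ)
    (hn : 1 ≤ n) (hm : 1 ≤ m) :
    (Ideal.span (joinMeetGens K n m)).IsRadical := by
  intro x hx
  obtain ⟨k, hk⟩ := hx
  have hknz : k ≠ 0 := by
    rintro rfl
    rw [pow_zero] at hk
    have h1 := JoinMeetAux.vanish_phi0 _ hk
    rw [map_one] at h1
    exact one_ne_zero h1
  refine JoinMeetAux.mem_of_vanish hn hm x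
    ((pow_eq_zero_iff hknz).mp (by rw [← map_pow]; exact JoinMeetAux.vanish_Eas _ hk))
    ((pow_eq_zero_iff hknz).mp (by rw [← map_pow]; exact JoinMeetAux.vanish_Eat _ hk))
    ((pow_eq_zero_iff hknz).mp (by rw [← map_pow]; exact JoinMeetAux.vanish_Ebs _ hk))
    ((pow_eq_zero_iff hknz).mp (by rw [← map_pow]; exact JoinMeetAux.vanish_Ebt _ hk))
    ((pow_eq_zero_iff hknz).mp (by rw [← map_pow]; exact JoinMeetAux.vanish_phi0 _ hk))
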